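/- Fix an integer k ≥ 1 and define ε(1)_q = −1 if 0 ≤ q < k and ε(1)_q = +1 if k ≤ q < 2k, ε(2)_q = min(q+1, 2k−q−1) for 0 ≤ q < 2k, and λ(1,2)_m = (3/(2k³)) Σ_{q=0}^{2k−m−1} ε(1)_q ε(2)_{q+m} for 0 ≤ m ≤ 2k−1. Then k · Σ_{m=1}^{2k−1} (λ(1,2)_m)² → 3/4 as k → ∞. -/
import Mathlib

open Filter

noncomputable def eps1 (k q : ℕ) : ℝ := if q < k then -1 else 1

noncomputable def eps2 (k q : ℕ) : ℝ := min ((q : ℝ) + 1) (2 * (k : ℝ) - (q : ℝ) - 1)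

noncomputable def lam12 (k m : ℕ) : ℝ :=
  (3 / (2 * (k : ℝ) ^ 3)) * ∑ q ∈ Finset.range (2 * k - m), eps1 k q * eps2 k (q + m)

/- ### Auxiliary facts -/

lemma eps1_neg (k q : ℕ) (h : q < k) : eps1 k q = -1 := if_pos h

lemma eps1_pos (k q : ℕ) (h : k ≤ q) : eps1 k q = 1 := if_neg (by omega)

lemma eps2_left (k q : ℕ) (h : q < k) : eps2 k q = (q:ℝ) + 1 := by
  have h1 : (q:ℝ) + 1 ≤ k := by exact_mod_cast h
  exact min_eq_left (by linarith)

lemma eps2_right (k q : ℕ) (h : k ≤ q + 1) : eps2 k q = 2*(k:ℝ) - q - 1 := by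
  have h1 : (k:ℝ) ≤ (q:ℝ) + 1 := by exact_mod_cast h
  exact min_eq_right (by linarith)

lemma sum_Ioc_succ_top' (a b : ℕ) (h : a ≤ b) (f : ℕ → ℝ) :
    ∑ x ∈ Finset.Ioc a (b+1), f x = (∑ x ∈ Finset.Ioc a b, f x) + f (b+1) := by
  rw [← Finset.Icc_add_one_left_eq_Ioc, ← Finset.Icc_add_one_left_eq_Ioc, Finset.sum_Icc_succ_top (by omega)]

lemma sum_Ico_linear (c d : ℝ) (a b : ℕ) (h : a ≤ b) :
    ∑ q ∈ Finset.Ico a b, (c + d * q) =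
      ((b:ℝ) - a) * c + d * ((b:ℝ) * ((b:ℝ)-1) - (a:ℝ) * ((a:ℝ)-1)) / 2 := by
  induction b, h using Nat.le_induction with
  | base => simp [Finset.Ico_self]
  | succ n hn ih =>
    rw [Finset.sum_Ico_succ_top (by omega), ih]
    push_cast
    ring

lemma pow_sum (n : ℕ) :
    (∑ m ∈ Finset.Ioc 0 n, (m:ℝ) = (n:ℝ)*(n+1)/2) ∧
    (∑ m ∈ Finset.Ioc 0 n, (m:ℝ)^2 = (n:ℝ)*(n+1)*(2*n+1)/6) ∧
    (∑ m ∈ Finset.Ioc 0 n, (m:ℝ)^3 = (n:ℝ)^2*(n+1)^2/4) ∧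
    (∑ m ∈ Finset.Ioc 0 n, (m:ℝ)^4 = (n:ℝ)*(n+1)*(2*n+1)*(3*(n:ℝ)^2+3*n-1)/30) ∧
    (∑ _m ∈ Finset.Ioc 0 n, (1:ℝ) = (n:ℝ)) := by
  induction n with
  | zero => simp
  | succ n ih =>
    obtain ⟨h1, h2, h3, h4, h5⟩ := ih
    refine ⟨?_, ?_, ?_, ?_, ?_⟩ <;>
      rw [sum_Ioc_succ_top' _ _ (Nat.zero_le n)] <;>
      first
        | (rw [h1]; push_cast; ring)
        | (rw [h2]; push_cast; ring)
        | (rw [h3]; push_cast; ring)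
        | (rw [h4]; push_cast; ring)
        | (rw [h5]; push_cast; ring)

/- ### Closed form of the inner sum -/

lemma inner_le (k m : ℕ) (hk : 1 ≤ k) (hm : m ≤ k) :
    ∑ q ∈ Finset.range (2 * k - m), eps1 k q * eps2 k (q + m) =
      (3*(m:ℝ)^2 + 3*m - 4*(k:ℝ)*m - 2*k) / 2 := by
  have hc1 : ((k - m : ℕ) : ℝ) = (k:ℝ) - m := by
    push_cast [Nat.cast_sub hm]; ring
  have hc2 : ((2*k - m : ℕ) : ℝ) = 2*(k:ℝ) - m := by
    push_cast [Nat.cast_sub (show m ≤ 2*k by omega)]; ring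
  rw [Finset.range_eq_Ico,
      ← Finset.sum_Ico_consecutive _ (Nat.zero_le (k - m)) (show k - m ≤ 2*k - m by omega),
      ← Finset.sum_Ico_consecutive _ (show k - m ≤ k by omega) (show k ≤ 2*k - m by omega)]
  have e1 : ∑ q ∈ Finset.Ico 0 (k - m), eps1 k q * eps2 k (q + m) =
      ∑ q ∈ Finset.Ico 0 (k - m), ((-(m:ℝ) - 1) + (-1) * q) := by
    refine Finset.sum_congr rfl fun q hq => ?_
    simp only [Finset.mem_Ico] at hq
    rw [eps1_neg k q (by omega), eps2_left k (q+m) (by omega)]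
    push_cast; ring
  have e2 : ∑ q ∈ Finset.Ico (k - m) k, eps1 k q * eps2 k (q + m) =
      ∑ q ∈ Finset.Ico (k - m) k, ((-2*(k:ℝ) + m + 1) + 1 * q) := by
    refine Finset.sum_congr rfl fun q hq => ?_
    simp only [Finset.mem_Ico] at hq
    rw [eps1_neg k q (by omega), eps2_right k (q+m) (by omega)]
    push_cast; ring
  have e3 : ∑ q ∈ Finset.Ico k (2*k - m), eps1 k q * eps2 k (q + m) =
      ∑ q ∈ Finset.Ico k (2*k - m), ((2*(k:ℝ) - m - 1) + (-1) * q) := by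
    refine Finset.sum_congr rfl fun q hq => ?_
    simp only [Finset.mem_Ico] at hq
    rw [eps1_pos k q (by omega), eps2_right k (q+m) (by omega)]
    push_cast; ring
  rw [e1, e2, e3,
      sum_Ico_linear _ _ _ _ (Nat.zero_le (k - m)),
      sum_Ico_linear _ _ _ _ (show k - m ≤ k by omega),
      sum_Ico_linear _ _ _ _ (show k ≤ 2*k - m by omega),
      hc1, hc2]
  push_cast
  ring

lemma inner_gt (k m : ℕ) (hk : 1 ≤ k) (hm : k < m) (hm2 : m ≤ 2*k - 1) :
    ∑ q ∈ Finset.range (2 * k - m), eps1 k q * eps2 k (q + m) =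
      -((2*(k:ℝ) - m) * (2*(k:ℝ) - m - 1)) / 2 := by
  have hc2 : ((2*k - m : ℕ) : ℝ) = 2*(k:ℝ) - m := by
    push_cast [Nat.cast_sub (show m ≤ 2*k by omega)]; ring
  rw [Finset.range_eq_Ico]
  have e1 : ∑ q ∈ Finset.Ico 0 (2*k - m), eps1 k q * eps2 k (q + m) =
      ∑ q ∈ Finset.Ico 0 (2*k - m), ((-2*(k:ℝ) + m + 1) + 1 * q) := by
    refine Finset.sum_congr rfl fun q hq => ?_
    simp only [Finset.mem_Ico] at hq
    rw [eps1_neg k q (by omega), eps2_right k (q+m) (by omega)]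
    push_cast; ring
  rw [e1, sum_Ico_linear _ _ _ _ (Nat.zero_le _), hc2]
  push_cast
  ring

/- ### Key identity -/

lemma key (k : ℕ) (hk : 1 ≤ k) :
    (k : ℝ) * ∑ m ∈ Finset.Icc 1 (2 * k - 1), (lam12 k m) ^ 2 =
      3/4 * (1 + ((k:ℝ))⁻¹^2 - 3*((k:ℝ))⁻¹^3 + ((k:ℝ))⁻¹^4) := by
  have hk0 : (k:ℝ) ≠ 0 := by positivity
  have hicc : Finset.Icc 1 (2*k - 1) = Finset.Ioc 0 (2*k - 1) := rfl
  rw [hicc, ← Finset.sum_Ioc_consecutive _ (Nat.zero_le k) (show k ≤ 2*k - 1 by omega)]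
  have c1 : ((2*k - 1 : ℕ) : ℝ) = 2*(k:ℝ) - 1 := by
    push_cast [Nat.cast_sub (show 1 ≤ 2*k by omega)]; ring
  -- first block
  have e1 : ∑ m ∈ Finset.Ioc 0 k, (lam12 k m) ^ 2 =
      ∑ m ∈ Finset.Ioc 0 k, ((9 / (16*(k:ℝ)^6)) *
        (9*(m:ℝ)^4 + (18 - 24*(k:ℝ))*(m:ℝ)^3 + (16*(k:ℝ)^2 - 36*k + 9)*(m:ℝ)^2
          + (16*(k:ℝ)^2 - 12*k)*(m:ℝ) + 4*(k:ℝ)^2 * 1)) := by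
    refine Finset.sum_congr rfl fun m hm => ?_
    simp only [Finset.mem_Ioc] at hm
    rw [lam12, inner_le k m hk hm.2]
    field_simp
    try ring
  have e2 : ∑ m ∈ Finset.Ioc k (2*k - 1), (lam12 k m) ^ 2 =
      ∑ m ∈ Finset.Ioc k (2*k - 1), ((9 / (16*(k:ℝ)^6)) *
        (1*(m:ℝ)^4 + (2 - 8*(k:ℝ))*(m:ℝ)^3 + (24*(k:ℝ)^2 - 12*k + 1)*(m:ℝ)^2
          + (-32*(k:ℝ)^3 + 24*(k:ℝ)^2 - 4*k)*(m:ℝ) + (16*(k:ℝ)^4 - 16*(k:ℝ)^3 + 4*(k:ℝ)^2) * 1)) := by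
    refine Finset.sum_congr rfl fun m hm => ?_
    simp only [Finset.mem_Ioc] at hm
    rw [lam12, inner_gt k m hk hm.1 hm.2]
    field_simp
    try ring
  have split : ∀ (a b : ℕ) (c4 c3 c2 cl c0 : ℝ),
      ∑ m ∈ Finset.Ioc a b, ((9 / (16*(k:ℝ)^6)) *
        (c4*(m:ℝ)^4 + c3*(m:ℝ)^3 + c2*(m:ℝ)^2 + cl*(m:ℝ) + c0 * 1)) =
      (9 / (16*(k:ℝ)^6)) * (c4 * ∑ m ∈ Finset.Ioc a b, (m:ℝ)^4
        + c3 * ∑ m ∈ Finset.Ioc a b, (m:ℝ)^3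
        + c2 * ∑ m ∈ Finset.Ioc a b, (m:ℝ)^2
        + cl * ∑ m ∈ Finset.Ioc a b, (m:ℝ)
        + c0 * ∑ _m ∈ Finset.Ioc a b, (1:ℝ)) := by
    intro a b c4 c3 c2 cl c0
    have expand : ∀ m : ℕ, (9 / (16*(k:ℝ)^6)) *
        (c4*(m:ℝ)^4 + c3*(m:ℝ)^3 + c2*(m:ℝ)^2 + cl*(m:ℝ) + c0 * 1) =
        ((9 / (16*(k:ℝ)^6)) * c4)*(m:ℝ)^4 + (((9 / (16*(k:ℝ)^6)) * c3)*(m:ℝ)^3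
          + (((9 / (16*(k:ℝ)^6)) * c2)*(m:ℝ)^2 + (((9 / (16*(k:ℝ)^6)) * cl)*(m:ℝ)
          + ((9 / (16*(k:ℝ)^6)) * c0)*(1:ℝ)))) := fun m => by ring
    simp only [expand, Finset.sum_add_distrib, ← Finset.mul_sum]
    ring
  -- sums over Ioc k (2k-1) expressed via consecutive
  obtain ⟨pk1, pk2, pk3, pk4, pk5⟩ := pow_sum k
  obtain ⟨q1, q2, q3, q4, q5⟩ := pow_sum (2*k - 1)
  have consec : ∀ f : ℕ → ℝ, ∑ m ∈ Finset.Ioc k (2*k-1), f m =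
      (∑ m ∈ Finset.Ioc 0 (2*k-1), f m) - ∑ m ∈ Finset.Ioc 0 k, f m := by
    intro f
    rw [← Finset.sum_Ioc_consecutive f (Nat.zero_le k) (show k ≤ 2*k - 1 by omega)]
    ring
  rw [e1, e2, split, split, consec (fun m => (m:ℝ)^4), consec (fun m => (m:ℝ)^3),
      consec (fun m => (m:ℝ)^2), consec (fun m => (m:ℝ)), consec (fun _ => (1:ℝ))]
  rw [pk1, pk2, pk3, pk4, pk5, q1, q2, q3, q4, q5, c1]
  field_simp
  try ring

/-- **The constant `3/4` in the asymptotic variance (Theorem 1 of the paper):**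
`k Σ_{m=1}^{2k−1} λ(1,2)_m² → 3/4` as `k → ∞`. -/
theorem stmt_14 :
    Tendsto (fun k : ℕ => (k : ℝ) * ∑ m ∈ Finset.Icc 1 (2 * k - 1), (lam12 k m) ^ 2)
      atTop (nhds (3 / 4)) := by
  have hinv : Tendsto (fun k : ℕ => ((k:ℝ))⁻¹) atTop (nhds 0) :=
    tendsto_inv_atTop_zero.comp tendsto_natCast_atTop_atTop
  have h2 : Tendsto (fun k : ℕ =>
      3/4 * (1 + ((k:ℝ))⁻¹^2 - 3*((k:ℝ))⁻¹^3 + ((k:ℝ))⁻¹^4)) atTop (nhds (3/4)) := by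
    have : Tendsto (fun k : ℕ =>
        3/4 * (1 + ((k:ℝ))⁻¹^2 - 3*((k:ℝ))⁻¹^3 + ((k:ℝ))⁻¹^4)) atTop
        (nhds (3/4 * (1 + 0^2 - 3*0^3 + 0^4))) := by
      apply Tendsto.const_mul
      exact (((tendsto_const_nhds.add (hinv.pow 2)).sub ((hinv.pow 3).const_mul 3)).add (hinv.pow 4))
    simpa using this
  refine h2.congr' ?_
  filter_upwards [eventually_ge_atTop 1] with k hk
  exact (key k hk).symm
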